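/- Let F be a field, k ≥ 1, V = F^{2k+2}, and let x_0,…,x_{k−1} ∈ V be linearly independent with x = span{x_0,…,x_{k−1}}. Let ω = x_0 ∧ ⋯ ∧ x_{k−1} ∈ ⋀^k V and let W = {ω ∧ v : v ∈ V} ⊆ ⋀^{k+1} V (the image of the linear map v ↦ ω ∧ v). Then: (i) W is a linear subspace of ⋀^{k+1} V of dimension k+2; (ii) every element of W is totally decomposable; (iii) for linearly independent v_0,…,v_k ∈ V, the vector v_0 ∧ ⋯ ∧ v_k lies in W if and only if x ⊆ span{v_0,…,v_k}. In other words, the Plücker coordinates of the k-dimensional projective subspaces of PG(2k+1,F) containing the fixed (k−1)-dimensional projective subspace ℙ(x) are exactly the nonzero points of a (k+1)-dimensional projective subspace contained in the Plücker embedding of the Grassmannian G_F(k+1,2k+2). -/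

import Mathlib

theorem my_ιMulti_snoc {F V : Type*} [Field F] [AddCommGroup V] [Module F V]
    {m : ℕ} (u : Fin m → V) (v : V) :
    ExteriorAlgebra.ιMulti F (m + 1) (Fin.snoc u v) =
      ExteriorAlgebra.ιMulti F m u * ExteriorAlgebra.ι F v := by
  rw [ExteriorAlgebra.ιMulti_apply, ExteriorAlgebra.ιMulti_apply, List.ofFn_succ']
  simp

theorem my_ιMulti_ne_zero {F V : Type*} [Field F] [AddCommGroup V] [Module F V]
    {m : ℕ} {u : Fin m → V} (hu : LinearIndependent F u) :
    ExteriorAlgebra.ιMulti F m u ≠ 0 := by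
  classical
  set U := Submodule.span F (Set.range u) with hU
  let bU : Module.Basis (Fin m) F U := Module.Basis.span hu
  obtain ⟨Q, hQ⟩ := Submodule.exists_isCompl U
  let proj : V →ₗ[F] U := Submodule.linearProjOfIsCompl U Q hQ
  let π : V →ₗ[F] (Fin m → F) := LinearMap.pi fun j => bU.coord j ∘ₗ proj
  let F0 : V [⋀^Fin m]→ₗ[F] F := (Matrix.detRowAlternating).compLinearMap π
  have hF0 : F0 u = 1 := by
    have hmat : (fun i => π (u i)) = (1 : Matrix (Fin m) (Fin m) F) := by
      funext i j
      have hmem : u i ∈ U := Submodule.subset_span ⟨i, rfl⟩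
      have hproj : proj (u i) = bU i := by
        have h1 : proj ((⟨u i, hmem⟩ : U) : V) = ⟨u i, hmem⟩ :=
          Submodule.linearProjOfIsCompl_apply_left hQ ⟨u i, hmem⟩
        rw [show (((⟨u i, hmem⟩ : U) : V)) = u i from rfl] at h1
        rw [h1]
        exact (Module.Basis.span_apply hu i).symm
      show bU.coord j (proj (u i)) = (1 : Matrix (Fin m) (Fin m) F) i j
      rw [hproj, Module.Basis.coord_apply, Module.Basis.repr_self, Matrix.one_apply]
      simp [Finsupp.single_apply]
    show Matrix.detRowAlternating (fun i => π (u i)) = 1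
    rw [hmat]
    exact Matrix.det_one
  intro h
  have hl := ExteriorAlgebra.liftAlternating_apply_ιMulti (R := F) (M := V)
      (Function.update (fun i => (0 : V [⋀^Fin i]→ₗ[F] F)) m F0) u
  rw [h, map_zero, Function.update_self, hF0] at hl
  exact one_ne_zero hl.symm

theorem my_alt_det_smul {F U N : Type*} [Field F] [AddCommGroup U] [Module F U]
    [AddCommGroup N] [Module F N] {m : ℕ} (e : Module.Basis (Fin m) F U)
    (g : U [⋀^Fin m]→ₗ[F] N) (w : Fin m → U) :
    g w = e.det w • g e := by
  classical
  have h : g = (LinearMap.toSpanSingleton F N (g e)).compAlternatingMap e.det := by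
    refine Module.Basis.ext_alternating e fun i hi => ?_
    let σ : Equiv.Perm (Fin m) := Equiv.ofBijective i (Finite.injective_iff_bijective.1 hi)
    show g (e ∘ σ) = (LinearMap.toSpanSingleton F N (g e)).compAlternatingMap e.det (e ∘ σ)
    simp [AlternatingMap.map_perm, Module.Basis.det_self, LinearMap.toSpanSingleton_apply,
      Units.smul_def]
  conv_lhs => rw [h]
  simp [LinearMap.toSpanSingleton_apply]

set_option maxHeartbeats 1000000 in
open ExteriorAlgebra in
/-- Let `x₀, …, x_{k−1}` be linearly independent vectors of `V = F^{2k+2}` (`k ≥ 1`), let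
`ω = x₀ ∧ ⋯ ∧ x_{k−1}` and `W = {ω ∧ v : v ∈ V}`. Then `W` is a `(k+2)`-dimensional
subspace of `⋀^{k+1} V`, all of whose elements are totally decomposable, and a wedge of
`k+1` linearly independent vectors lies in `W` iff its span contains `span{x₀,…,x_{k−1}}`.
Thus the `k`-dimensional projective subspaces of `PG(2k+1,F)` through a fixed
`(k−1)`-dimensional projective subspace form a `(k+1)`-dimensional projective subspace
contained in the Plücker embedding of the Grassmannian. -/
theorem schubert_through_fixed_subspace_is_linear {F : Type*} [Field F]
    (k : ℕ) (hk : 1 ≤ k)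
    (x : Fin k → (Fin (2 * k + 2) → F))
    (hx : LinearIndependent F x)
    (ω : ExteriorAlgebra F (Fin (2 * k + 2) → F))
    (hω : ω = (List.ofFn fun i => ι F (x i)).prod)
    (W : Submodule F (ExteriorAlgebra F (Fin (2 * k + 2) → F)))
    (hW : W = LinearMap.range ((LinearMap.mulLeft F ω) ∘ₗ
      (ι F : (Fin (2 * k + 2) → F) →ₗ[F] ExteriorAlgebra F (Fin (2 * k + 2) → F)))) :
    Module.finrank F W = k + 2 ∧
    (∀ w ∈ W, ∃ v : Fin (k + 1) → (Fin (2 * k + 2) → F),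
      w = (List.ofFn fun i => ι F (v i)).prod) ∧
    (∀ v : Fin (k + 1) → (Fin (2 * k + 2) → F), LinearIndependent F v →
      ((List.ofFn fun i => ι F (v i)).prod ∈ W ↔
        Submodule.span F (Set.range x) ≤ Submodule.span F (Set.range v))) := by
  classical
  set f : (Fin (2 * k + 2) → F) →ₗ[F] ExteriorAlgebra F (Fin (2 * k + 2) → F) :=
    (LinearMap.mulLeft F ω) ∘ₗ
      (ι F : (Fin (2 * k + 2) → F) →ₗ[F] ExteriorAlgebra F (Fin (2 * k + 2) → F)) with hf
  have key : ∀ v : Fin (2 * k + 2) → F, f v = ιMulti F (k + 1) (Fin.snoc x v) := by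
    intro v
    rw [my_ιMulti_snoc, ExteriorAlgebra.ιMulti_apply, ← hω]
    rfl
  -- each x i wedged onto ω gives zero
  have hzero : ∀ i : Fin k, ιMulti F (k + 1) (Fin.snoc x (x i)) = 0 := by
    intro i
    refine AlternatingMap.map_eq_zero_of_eq _ _ (i := i.castSucc) (j := Fin.last k) ?_ ?_
    · rw [Fin.snoc_castSucc, Fin.snoc_last]
    · exact (Fin.castSucc_lt_last i).ne
  -- kernel of f is span x
  have hker : LinearMap.ker f = Submodule.span F (Set.range x) := by
    apply le_antisymm
    · intro v hv
      by_contra hvs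
      have hind : LinearIndependent F (Fin.snoc x v) :=
        linearIndependent_fin_snoc.2 ⟨hx, hvs⟩
      exact my_ιMulti_ne_zero hind (by rw [← key v]; exact hv)
    · intro v hv
      obtain ⟨c, hc⟩ := (Submodule.mem_span_range_iff_exists_fun F).1 hv
      rw [LinearMap.mem_ker, key v]
      have h1 : (Fin.snoc x v : Fin (k + 1) → Fin (2 * k + 2) → F) =
          Function.update (Fin.snoc x 0) (Fin.last k) (∑ i, c i • x i) := by
        rw [Fin.update_snoc_last, hc]
      rw [h1, AlternatingMap.map_update_sum]
      refine Finset.sum_eq_zero fun i _ => ?_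
      rw [AlternatingMap.map_update_smul, Fin.update_snoc_last, hzero i, smul_zero]
  have hVfin : Module.finrank F (Fin (2 * k + 2) → F) = 2 * k + 2 := by
    simp [Module.finrank_pi]
  refine ⟨?_, ?_, ?_⟩
  · -- finrank
    have hrn := LinearMap.finrank_range_add_finrank_ker f
    rw [hker, finrank_span_eq_card hx, Fintype.card_fin, hVfin] at hrn
    rw [hW]
    omega
  · -- decomposability
    intro w hw
    rw [hW, LinearMap.mem_range] at hw
    obtain ⟨v, hv⟩ := hw
    refine ⟨Fin.snoc x v, ?_⟩
    rw [← ExteriorAlgebra.ιMulti_apply, ← key v, hv]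
  · intro v hv
    constructor
    · intro hmem
      rw [hW, LinearMap.mem_range] at hmem
      obtain ⟨u, hu⟩ := hmem
      rw [← ExteriorAlgebra.ιMulti_apply, key u] at hu
      rw [Submodule.span_le]
      rintro _ ⟨j, rfl⟩
      rw [SetLike.mem_coe]
      by_contra hxj
      have hind : LinearIndependent F (Fin.snoc v (x j)) :=
        linearIndependent_fin_snoc.2 ⟨hv, hxj⟩
      apply my_ιMulti_ne_zero hind
      rw [my_ιMulti_snoc, ← hu, ← my_ιMulti_snoc]
      refine AlternatingMap.map_eq_zero_of_eq _ _
        (i := (j.castSucc).castSucc) (j := Fin.last (k + 1)) ?_ ?_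
      · rw [Fin.snoc_castSucc, Fin.snoc_castSucc, Fin.snoc_last]
      · exact (Fin.castSucc_lt_last _).ne
    · intro hle
      set U := Submodule.span F (Set.range v) with hUdef
      have hUrank : Module.finrank F U = k + 1 := by
        rw [hUdef, finrank_span_eq_card hv, Fintype.card_fin]
      have hxU : ∀ i, x i ∈ U := fun i => hle (Submodule.subset_span ⟨i, rfl⟩)
      have hlt : ¬(U ≤ Submodule.span F (Set.range x)) := by
        intro hUle
        have hmono := Submodule.finrank_mono hUle
        rw [hUrank, finrank_span_eq_card hx, Fintype.card_fin] at hmono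
        omega
      obtain ⟨u, huU, hus⟩ := SetLike.not_le_iff_exists.1 hlt
      have hy : LinearIndependent F (Fin.snoc x u : Fin (k + 1) → Fin (2 * k + 2) → F) :=
        linearIndependent_fin_snoc.2 ⟨hx, hus⟩
      have hyU : ∀ i, (Fin.snoc x u : Fin (k + 1) → Fin (2 * k + 2) → F) i ∈ U := by
        intro i
        refine Fin.lastCases ?_ ?_ i
        · simpa using huU
        · intro j; simpa using hxU j
      set y' : Fin (k + 1) → U := fun i => ⟨_, hyU i⟩ with hy'def
      set v' : Fin (k + 1) → U := fun i => ⟨v i, Submodule.subset_span ⟨i, rfl⟩⟩ with hv'def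
      have hy'li : LinearIndependent F y' := by
        apply LinearIndependent.of_comp U.subtype
        convert hy
        rfl
      let e : Module.Basis (Fin (k + 1)) F U :=
        basisOfLinearIndependentOfCardEqFinrank hy'li (by rw [hUrank, Fintype.card_fin])
      let g : U [⋀^Fin (k + 1)]→ₗ[F] ExteriorAlgebra F (Fin (2 * k + 2) → F) :=
        (ExteriorAlgebra.ιMulti F (k + 1)).compLinearMap U.subtype
    -- g e = ιMulti (snoc x u)
      have hge : g e = ιMulti F (k + 1) (Fin.snoc x u) := by
        show ιMulti F (k + 1) (U.subtype ∘ e) = _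
        congr 1
        funext i
        simp [e, coe_basisOfLinearIndependentOfCardEqFinrank, y']
      have hgv : g v' = ιMulti F (k + 1) v := rfl
      have hdet := my_alt_det_smul e g v'
      rw [hW, LinearMap.mem_range]
      refine ⟨e.det v' • u, ?_⟩
      rw [map_smul, key u, ← hge, ← hdet, hgv, ExteriorAlgebra.ιMulti_apply]
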